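/- Let a and b be linear operators on ℂ² satisfying ab + ba = 1, a² = 0, b² = 0, let φ₀ ≠ 0 satisfy aφ₀ = 0 and Ψ₀ ≠ 0 satisfy b*Ψ₀ = 0. Then ⟨φ₀, Ψ₀⟩ ≠ 0; consequently the vacua can always be normalized so that ⟨φ₀, Ψ₀⟩ = 1. -/

import Mathlib

open Matrix
open scoped InnerProductSpace ComplexOrder

noncomputable section

/-- Action of a 2×2 complex matrix (an operator) on a vector of ℂ². -/
def act (A : Matrix (Fin 2) (Fin 2) ℂ) (x : EuclideanSpace ℂ (Fin 2)) :
    EuclideanSpace ℂ (Fin 2) := WithLp.toLp 2 (A.mulVec x)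

lemma inner_act (A : Matrix (Fin 2) (Fin 2) ℂ) (x y : EuclideanSpace ℂ (Fin 2)) :
    ⟪act A x, y⟫_ℂ = ⟪x, act Aᴴ y⟫_ℂ := by
  change (y : Fin 2 → ℂ) ⬝ᵥ (star (A.mulVec x)) = (Aᴴ.mulVec y) ⬝ᵥ star (x : Fin 2 → ℂ)
  rw [dotProduct_comm, star_mulVec, dotProduct_comm (Aᴴ *ᵥ _), dotProduct_mulVec]

lemma act_smul (A : Matrix (Fin 2) (Fin 2) ℂ) (c : ℂ) (x : EuclideanSpace ℂ (Fin 2)) :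
    act A (c • x) = c • act A x := by
  apply (WithLp.ofLp_injective 2)
  change A.mulVec (c • (x : Fin 2 → ℂ)) = c • A.mulVec x
  rw [Matrix.mulVec_smul]

/-- For a pseudo-fermion pair with nonzero vacua `a φ₀ = 0`, `b* Ψ₀ = 0`,
one has `⟨φ₀, Ψ₀⟩ ≠ 0`; consequently the vacua can be normalized so that
`⟨φ₀, Ψ₀⟩ = 1`. -/
theorem stmt2 (a b : Matrix (Fin 2) (Fin 2) ℂ)
    (hab : a * b + b * a = 1) (ha2 : a * a = 0) (hb2 : b * b = 0)
    (φ₀ Ψ₀ : EuclideanSpace ℂ (Fin 2)) (hφ₀ : φ₀ ≠ 0) (hΨ₀ : Ψ₀ ≠ 0)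
    (hvacφ : act a φ₀ = 0) (hvacΨ : act bᴴ Ψ₀ = 0) :
    ⟪φ₀, Ψ₀⟫_ℂ ≠ 0 ∧
    ∃ φ₀' Ψ₀' : EuclideanSpace ℂ (Fin 2), (∃ k : ℂ, k ≠ 0 ∧ φ₀' = k • φ₀) ∧
      (∃ k' : ℂ, k' ≠ 0 ∧ Ψ₀' = k' • Ψ₀) ∧
      act a φ₀' = 0 ∧ act bᴴ Ψ₀' = 0 ∧ ⟪φ₀', Ψ₀'⟫_ℂ = 1 := by
  set v : EuclideanSpace ℂ (Fin 2) := act b φ₀ with hv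
  have hav : act a v = φ₀ := by
    apply (WithLp.ofLp_injective 2)
    show a.mulVec (b.mulVec φ₀) = φ₀
    rw [Matrix.mulVec_mulVec]
    have h1 : a * b = 1 - b * a := by rw [← hab]; noncomm_ring
    rw [h1, Matrix.sub_mulVec, Matrix.one_mulVec, ← Matrix.mulVec_mulVec]
    have : a.mulVec φ₀ = 0 := congrArg WithLp.ofLp hvacφ
    rw [this, Matrix.mulVec_zero, sub_zero]
  have key : ⟪φ₀, Ψ₀⟫_ℂ ≠ 0 := by
    intro h0
    -- also v ⊥ Ψ₀
    have hvΨ : ⟪v, Ψ₀⟫_ℂ = 0 := by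
      rw [hv, inner_act, hvacΨ, inner_zero_right]
    -- φ₀ and v are linearly independent
    have hind : LinearIndependent ℂ ![φ₀, v] := by
      rw [linearIndependent_fin2]
      constructor
      · simp only [Matrix.cons_val_one, Matrix.head_cons, Matrix.cons_val_zero]
        intro hveq
        apply hφ₀
        rw [← hav, hveq]
        apply (WithLp.ofLp_injective 2)
        show a.mulVec 0 = 0
        exact Matrix.mulVec_zero a
      · simp only [Matrix.cons_val_one, Matrix.head_cons, Matrix.cons_val_zero]
        intro c hc
        have h2 : act a (c • v) = act a φ₀ := by rw [hc]
        rw [act_smul, hav, hvacφ] at h2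
        rcases smul_eq_zero.mp h2 with hc0 | h
        · apply hφ₀; rw [← hc, hc0, zero_smul]
        · exact hφ₀ h
    have htop : Submodule.span ℂ (Set.range ![φ₀, v]) = ⊤ :=
      hind.span_eq_top_of_card_eq_finrank (by simp)
    have hall : ∀ x : EuclideanSpace ℂ (Fin 2), ⟪x, Ψ₀⟫_ℂ = 0 := by
      intro x
      have hx : x ∈ Submodule.span ℂ (Set.range ![φ₀, v]) := by rw [htop]; trivial
      induction hx using Submodule.span_induction with
      | mem y hy =>
        rcases hy with ⟨i, rfl⟩
        fin_cases i
        · simpa using h0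
        · simpa using hvΨ
      | zero => exact inner_zero_left _
      | add y z _ _ hy hz => rw [inner_add_left, hy, hz, add_zero]
      | smul c y _ hy => rw [inner_smul_left, hy, mul_zero]
    apply hΨ₀
    apply ext_inner_left ℂ
    intro w
    rw [hall w, inner_zero_right]
  refine ⟨key, φ₀, (⟪φ₀, Ψ₀⟫_ℂ)⁻¹ • Ψ₀, ⟨1, one_ne_zero, (one_smul _ _).symm⟩,
    ⟨(⟪φ₀, Ψ₀⟫_ℂ)⁻¹, inv_ne_zero key, rfl⟩, hvacφ, ?_, ?_⟩
  · rw [act_smul, hvacΨ, smul_zero]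
  · rw [inner_smul_right, inv_mul_cancel₀ key]
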